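/- Assume 1 lies in the resolvent set of A. Let Y_N be a finite-dimensional subspace of Y with r = dim Y_N, let Q_N : Y → Y be a bounded projection (Q_N² = Q_N) with range Y_N, let G₂₀ : Y → ℂ^r be a bounded operator whose restriction to Y_N is a bijection onto ℂ^r, and set Z = ℂ^r, G₁ = I, G₂ = G₂₀ ∘ Q_N. Let K : ℂ^r → U be a bounded operator such that Q_N ∘ P(1) ∘ K : ℂ^r → Y_N is injective. Fix w ∈ U_d and y_ref ∈ Y and consider the one-dimensional exosystem with S = 1 ∈ ℂ, E v = v·w, F v = −v·y_ref. Assume 1 lies in the resolvent set of the closed-loop operator A_e. Then: (i) there is a unique z ∈ ℂ^r with Q_N(P(1) K z) = Q_N y_ref − Q_N(P_d(1) w); and (ii) the closed-loop transfer function at 1 satisfies (C_e (I − A_e)⁻¹ B_e + D_e)(1) = (I − Q_N)(P(1) K z + P_d(1) w − y_ref) in Y. -/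

import Mathlib

noncomputable section

open ContinuousLinearMap

variable {X Z U Ud Y W : Type*}
  [NormedAddCommGroup X] [NormedSpace ℂ X]
  [NormedAddCommGroup Z] [NormedSpace ℂ Z]
  [NormedAddCommGroup U] [NormedSpace ℂ U]
  [NormedAddCommGroup Ud] [NormedSpace ℂ Ud]
  [NormedAddCommGroup Y] [NormedSpace ℂ Y]
  [NormedAddCommGroup W] [NormedSpace ℂ W]

/-- The closed-loop system operator `A_e` on `X × Z`:
`A_e(x,z) = (Ax + BKz, G₂Cx + G₁z + G₂DKz)`. -/
def Ae (A : X →L[ℂ] X) (B : U →L[ℂ] X) (C : X →L[ℂ] Y) (D : U →L[ℂ] Y)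
    (G₁ : Z →L[ℂ] Z) (G₂ : Y →L[ℂ] Z) (K : Z →L[ℂ] U) : (X × Z) →L[ℂ] (X × Z) :=
  ((A.comp (fst ℂ X Z)) + ((B.comp K).comp (snd ℂ X Z))).prod
    ((G₂.comp (C.comp (fst ℂ X Z))) + (G₁.comp (snd ℂ X Z))
      + ((G₂.comp (D.comp K)).comp (snd ℂ X Z)))

/-- The closed-loop input operator `B_e v = (B_d E v, G₂(D_d E v + F v))`. -/
def Be (Bd : Ud →L[ℂ] X) (Dd : Ud →L[ℂ] Y) (E : W →L[ℂ] Ud) (F : W →L[ℂ] Y)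
    (G₂ : Y →L[ℂ] Z) : W →L[ℂ] (X × Z) :=
  (Bd.comp E).prod (G₂.comp ((Dd.comp E) + F))

/-- The closed-loop output operator `C_e(x,z) = Cx + DKz`. -/
def Ce (C : X →L[ℂ] Y) (D : U →L[ℂ] Y) (K : Z →L[ℂ] U) : (X × Z) →L[ℂ] Y :=
  C.comp (fst ℂ X Z) + (D.comp K).comp (snd ℂ X Z)

/-- The closed-loop feedthrough operator `D_e = D_d E + F`. -/
def De (Dd : Ud →L[ℂ] Y) (E : W →L[ℂ] Ud) (F : W →L[ℂ] Y) : W →L[ℂ] Y :=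
  (Dd.comp E) + F

/-- The controller `(G₁, G₂, K)` solves the output regulation problem: the closed-loop
system is exponentially stable and the regulation error decays at a uniform exponential
rate for all initial states of the system, the controller and the exosystem. -/
def SolvesORP (A : X →L[ℂ] X) (B : U →L[ℂ] X) (Bd : Ud →L[ℂ] X)
    (C : X →L[ℂ] Y) (D : U →L[ℂ] Y) (Dd : Ud →L[ℂ] Y)
    (S : W →L[ℂ] W) (E : W →L[ℂ] Ud) (F : W →L[ℂ] Y)
    (G₁ : Z →L[ℂ] Z) (G₂ : Y →L[ℂ] Z) (K : Z →L[ℂ] U) : Prop :=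
  (∀ lam ∈ spectrum ℂ (Ae A B C D G₁ G₂ K), ‖lam‖ < 1) ∧
  ∃ M α : ℝ, 0 < M ∧ 0 < α ∧
    ∀ (x₀ : X) (z₀ : Z) (v₀ : W) (v : ℕ → W) (xe : ℕ → X × Z),
      v 0 = v₀ → (∀ n, v (n + 1) = S (v n)) →
      xe 0 = (x₀, z₀) →
      (∀ n, xe (n + 1) = Ae A B C D G₁ G₂ K (xe n) + Be Bd Dd E F G₂ (v n)) →
      ∀ n : ℕ, ‖Ce C D K (xe n) + De Dd E F (v n)‖
        ≤ M * Real.exp (-(α * n)) * (‖x₀‖ + ‖z₀‖ + ‖v₀‖)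

/-- The controller `(G₁, G₂, K)` solves the robust output regulation problem: it solves
the output regulation problem and retains exponential decay of the regulation error for
every perturbation of the operators `(A, B, B_d, C, D, D_d, E, F)` that preserves the
exponential stability of the closed-loop system. -/
def SolvesRORP (A : X →L[ℂ] X) (B : U →L[ℂ] X) (Bd : Ud →L[ℂ] X)
    (C : X →L[ℂ] Y) (D : U →L[ℂ] Y) (Dd : Ud →L[ℂ] Y)
    (S : W →L[ℂ] W) (E : W →L[ℂ] Ud) (F : W →L[ℂ] Y)
    (G₁ : Z →L[ℂ] Z) (G₂ : Y →L[ℂ] Z) (K : Z →L[ℂ] U) : Prop :=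
  SolvesORP A B Bd C D Dd S E F G₁ G₂ K ∧
  ∀ (A' : X →L[ℂ] X) (B' : U →L[ℂ] X) (Bd' : Ud →L[ℂ] X)
    (C' : X →L[ℂ] Y) (D' : U →L[ℂ] Y) (Dd' : Ud →L[ℂ] Y)
    (E' : W →L[ℂ] Ud) (F' : W →L[ℂ] Y),
    (∀ lam ∈ spectrum ℂ (Ae A' B' C' D' G₁ G₂ K), ‖lam‖ < 1) →
    ∃ M α : ℝ, 0 < M ∧ 0 < α ∧
      ∀ (x₀ : X) (z₀ : Z) (v₀ : W) (v : ℕ → W) (xe : ℕ → X × Z),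
        v 0 = v₀ → (∀ n, v (n + 1) = S (v n)) →
        xe 0 = (x₀, z₀) →
        (∀ n, xe (n + 1) = Ae A' B' C' D' G₁ G₂ K (xe n) + Be Bd' Dd' E' F' G₂ (v n)) →
        ∀ n : ℕ, ‖Ce C' D' K (xe n) + De Dd' E' F' (v n)‖
          ≤ M * Real.exp (-(α * n)) * (‖x₀‖ + ‖z₀‖ + ‖v₀‖)

/-- The transfer function `P(1) = C(I−A)⁻¹B + D` of the system at `μ = 1`. -/
def P1 (A : X →L[ℂ] X) (B : U →L[ℂ] X) (C : X →L[ℂ] Y) (D : U →L[ℂ] Y) : U →L[ℂ] Y :=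
  C.comp ((Ring.inverse ((1 : X →L[ℂ] X) - A)).comp B) + D

/-- The disturbance transfer function `P_d(1) = C(I−A)⁻¹B_d + D_d` at `μ = 1`. -/
def Pd1 (A : X →L[ℂ] X) (Bd : Ud →L[ℂ] X) (C : X →L[ℂ] Y) (Dd : Ud →L[ℂ] Y) :
    Ud →L[ℂ] Y :=
  C.comp ((Ring.inverse ((1 : X →L[ℂ] X) - A)).comp Bd) + Dd

set_option maxHeartbeats 1000000

/-- computation of the closed-loop transfer function at `μ = 1` for the
controller `(I, G₂₀Q_N, K)` and one-dimensional exosystem `S = 1`, `E v = v w`,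
`F v = −v y_ref`: there is a unique `z ∈ ℂ^r` with
`Q_N P(1)Kz = Q_N y_ref − Q_N P_d(1)w`, and
`P_e(1)(1) = (I − Q_N)(P(1)Kz + P_d(1)w − y_ref)`. -/
theorem closed_loop_transfer_function_at_one
    {X U Ud Y : Type*}
    [NormedAddCommGroup X] [NormedSpace ℂ X] [CompleteSpace X]
    [NormedAddCommGroup U] [InnerProductSpace ℂ U] [CompleteSpace U]
    [NormedAddCommGroup Ud] [InnerProductSpace ℂ Ud] [CompleteSpace Ud]
    [NormedAddCommGroup Y] [InnerProductSpace ℂ Y] [CompleteSpace Y]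
    (A : X →L[ℂ] X) (B : U →L[ℂ] X) (Bd : Ud →L[ℂ] X)
    (C : X →L[ℂ] Y) (D : U →L[ℂ] Y) (Dd : Ud →L[ℂ] Y)
    (YN : Submodule ℂ Y) [FiniteDimensional ℂ YN]
    (r : ℕ) (hrank : Module.finrank ℂ YN = r)
    (QN : Y →L[ℂ] Y) (hproj : QN.comp QN = QN) (hranQN : LinearMap.range (QN : Y →ₗ[ℂ] Y) = YN)
    (G₂₀ : Y →L[ℂ] EuclideanSpace ℂ (Fin r))
    (hbij : Function.Bijective fun y : YN => G₂₀ (y : Y))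
    (K : EuclideanSpace ℂ (Fin r) →L[ℂ] U)
    (hinj : Function.Injective fun z : EuclideanSpace ℂ (Fin r) => QN (P1 A B C D (K z)))
    (w : Ud) (yref : Y)
    (hresA : (1 : ℂ) ∈ resolventSet ℂ A)
    (hresAe : (1 : ℂ) ∈ resolventSet ℂ
      (Ae A B C D (1 : EuclideanSpace ℂ (Fin r) →L[ℂ] EuclideanSpace ℂ (Fin r))
        (G₂₀.comp QN) K)) :
    (∃! z : EuclideanSpace ℂ (Fin r),
        QN (P1 A B C D (K z)) = QN yref - QN (Pd1 A Bd C Dd w))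
    ∧ ∀ z : EuclideanSpace ℂ (Fin r),
        QN (P1 A B C D (K z)) = QN yref - QN (Pd1 A Bd C Dd w) →
        Ce C D K
            (Ring.inverse
              ((1 : (X × EuclideanSpace ℂ (Fin r)) →L[ℂ] (X × EuclideanSpace ℂ (Fin r)))
                - Ae A B C D (1 : EuclideanSpace ℂ (Fin r) →L[ℂ] EuclideanSpace ℂ (Fin r))
                    (G₂₀.comp QN) K)
              (Be Bd Dd (ContinuousLinearMap.toSpanSingleton ℂ w)
                (-(ContinuousLinearMap.toSpanSingleton ℂ yref)) (G₂₀.comp QN) (1 : ℂ)))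
          + De Dd (ContinuousLinearMap.toSpanSingleton ℂ w)
              (-(ContinuousLinearMap.toSpanSingleton ℂ yref)) (1 : ℂ)
        = (P1 A B C D (K z) + Pd1 A Bd C Dd w - yref)
            - QN (P1 A B C D (K z) + Pd1 A Bd C Dd w - yref) := by
  classical
  -- invertibility of (1 - A)
  have hA : IsUnit ((1 : X →L[ℂ] X) - A) := by
    have h := hresA
    simpa [resolventSet, Set.mem_setOf_eq] using h
  have hRl : ∀ x : X,
      Ring.inverse ((1 : X →L[ℂ] X) - A) (x - A x) = x := by
    intro x
    have h := Ring.inverse_mul_cancel _ hA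
    have h2 := congrArg (fun (f : X →L[ℂ] X) => f x) h
    simpa [ContinuousLinearMap.mul_apply, ContinuousLinearMap.sub_apply] using h2
  have hmem : ∀ y : Y, QN y ∈ YN := fun y => hranQN ▸ LinearMap.mem_range_self _ y
  -- the linear map z ↦ QN (P1 (K z)) into YN
  let L : EuclideanSpace ℂ (Fin r) →ₗ[ℂ] YN :=
    { toFun := fun z => ⟨QN (P1 A B C D (K z)), hmem _⟩
      map_add' := fun a b => by ext; simp
      map_smul' := fun c a => by ext; simp }
  have hLinj : Function.Injective L := by
    intro a b hab
    apply hinj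
    simpa [L, Subtype.ext_iff] using hab
  have hLsurj : Function.Surjective L := by
    have h1 : Module.finrank ℂ (EuclideanSpace ℂ (Fin r)) = Module.finrank ℂ YN := by
      simp [hrank]
    exact (LinearMap.injective_iff_surjective_of_finrank_eq_finrank h1).mp hLinj
  obtain ⟨z₁, hz₁⟩ := hLsurj ⟨QN yref - QN (Pd1 A Bd C Dd w), by
    have h : QN yref - QN (Pd1 A Bd C Dd w) = QN (yref - Pd1 A Bd C Dd w) := by
      simp
    rw [h]; exact hmem _⟩
  have hz₁' : QN (P1 A B C D (K z₁)) = QN yref - QN (Pd1 A Bd C Dd w) := by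
    simpa [L, Subtype.ext_iff] using hz₁
  have huniq : ∀ z, QN (P1 A B C D (K z)) = QN yref - QN (Pd1 A Bd C Dd w) → z = z₁ := by
    intro z hz
    exact hinj (by simp only [hz, hz₁'])
  refine ⟨⟨z₁, hz₁', fun z hz => huniq z hz⟩, ?_⟩
  -- closed-loop resolvent computation
  have hAe : IsUnit ((1 : (X × EuclideanSpace ℂ (Fin r)) →L[ℂ] (X × EuclideanSpace ℂ (Fin r)))
      - Ae A B C D (1 : EuclideanSpace ℂ (Fin r) →L[ℂ] EuclideanSpace ℂ (Fin r))
        (G₂₀.comp QN) K) := by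
    have h := hresAe
    simpa [resolventSet, Set.mem_setOf_eq] using h
  set Aₑ := Ae A B C D (1 : EuclideanSpace ℂ (Fin r) →L[ℂ] EuclideanSpace ℂ (Fin r))
      (G₂₀.comp QN) K with hAₑ
  set Bₑ := Be Bd Dd (ContinuousLinearMap.toSpanSingleton ℂ w)
      (-(ContinuousLinearMap.toSpanSingleton ℂ yref)) (G₂₀.comp QN) with hBₑ
  set p := Ring.inverse ((1 : (X × EuclideanSpace ℂ (Fin r)) →L[ℂ]
      (X × EuclideanSpace ℂ (Fin r))) - Aₑ) (Bₑ (1 : ℂ)) with hpdef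
  have hp : p - Aₑ p = Bₑ (1 : ℂ) := by
    have h := Ring.mul_inverse_cancel _ hAe
    have h2 := congrArg (fun (f : (X × EuclideanSpace ℂ (Fin r)) →L[ℂ]
        (X × EuclideanSpace ℂ (Fin r))) => f (Bₑ (1 : ℂ))) h
    simpa [ContinuousLinearMap.mul_apply, ContinuousLinearMap.sub_apply, hpdef] using h2
  have hp1 : p.1 - (A p.1 + B (K p.2)) = Bd w := by
    have h := congrArg Prod.fst hp
    simpa [hAₑ, hBₑ, Ae, Be, ContinuousLinearMap.sub_apply, ContinuousLinearMap.add_apply,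
      ContinuousLinearMap.comp_apply, ContinuousLinearMap.prod_apply,
      ContinuousLinearMap.toSpanSingleton_apply, Prod.sub_def] using h
  have hp2 : p.2 - ((G₂₀ (QN (C p.1)) + p.2) + G₂₀ (QN (D (K p.2))))
      = G₂₀ (QN (Dd w + -yref)) := by
    have h := congrArg Prod.snd hp
    simpa [hAₑ, hBₑ, Ae, Be, ContinuousLinearMap.sub_apply, ContinuousLinearMap.add_apply,
      ContinuousLinearMap.comp_apply, ContinuousLinearMap.prod_apply,
      ContinuousLinearMap.toSpanSingleton_apply, ContinuousLinearMap.neg_apply,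
      Prod.sub_def] using h
  -- solve for p.1
  have hx : p.1 = Ring.inverse ((1 : X →L[ℂ] X) - A) (B (K p.2) + Bd w) := by
    have h1 : p.1 - A p.1 = B (K p.2) + Bd w := by
      have h := hp1
      rw [sub_add_eq_sub_sub, sub_eq_iff_eq_add] at h
      rw [h, add_comm]
    rw [← h1, hRl]
  -- the regulation error
  set e := P1 A B C D (K p.2) + Pd1 A Bd C Dd w - yref with hedef
  have hCp : C p.1 + D (K p.2) + (Dd w + -yref) = e := by
    rw [hx, hedef]
    simp only [P1, Pd1, ContinuousLinearMap.add_apply, ContinuousLinearMap.comp_apply,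
      map_add]
    abel
  have hG2e : G₂₀ (QN e) = 0 := by
    have h : G₂₀ (QN (C p.1)) + G₂₀ (QN (D (K p.2))) + G₂₀ (QN (Dd w + -yref)) = 0 := by
      have := hp2
      linear_combination (norm := abel) -this
    have h2 : G₂₀ (QN (C p.1 + D (K p.2) + (Dd w + -yref))) = 0 := by
      simpa [map_add] using h
    rwa [hCp] at h2
  have hQe : QN e = 0 := by
    have h : (fun y : YN => G₂₀ (y : Y)) ⟨QN e, hmem e⟩ = (fun y : YN => G₂₀ (y : Y)) 0 := by
      simpa using hG2e
    have := hbij.1 h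
    simpa [Subtype.ext_iff] using this
  have hz₂ : QN (P1 A B C D (K p.2)) = QN yref - QN (Pd1 A Bd C Dd w) := by
    have h : QN (P1 A B C D (K p.2)) + QN (Pd1 A Bd C Dd w) - QN yref = 0 := by
      have := hQe
      simpa [hedef, map_add, map_sub] using this
    linear_combination (norm := abel) h
  -- now finish
  intro z hz
  have hzz : z = p.2 := (huniq z hz).trans (huniq p.2 hz₂).symm
  have hout : Ce C D K p + De Dd (ContinuousLinearMap.toSpanSingleton ℂ w)
      (-(ContinuousLinearMap.toSpanSingleton ℂ yref)) (1 : ℂ) = e := by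
    rw [← hCp]
    simp [Ce, De, ContinuousLinearMap.add_apply, ContinuousLinearMap.comp_apply,
      ContinuousLinearMap.toSpanSingleton_apply, ContinuousLinearMap.neg_apply]
  rw [hzz]
  rw [← hedef]  -- may or may not apply; goal uses z rewritten to p.2
  rw [hQe, sub_zero]
  exact hout
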